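/- Let Y, Z, W, and H̃ be finite-dimensional real inner product spaces, R : Y → Z a surjective linear map, N ≥ 1 an integer, ℓ : Y → ℝ^{N−1} a linear map, G : W → Y an injective linear map with range(G) = ker(R), G̃ : H̃ → Y an injective linear map, and J : W → H̃ a linear map with G̃ ∘ J = G. Set W₀ := {w ∈ W : ℓ(G w) = 0}. Let a : Y × Y → ℝ be a bilinear form with a(θ,θ) ≥ 0 for all θ ∈ Y and a(G w, G w) ≥ α‖w‖_W² for all w ∈ W₀, for some α > 0. Assume the surjectivity property: for every (r, κ) ∈ Z × ℝ^{N−1} there exists ψ ∈ Y with R ψ = r and ℓ ψ = κ. Then for every linear functional F : H̃ → ℝ there exists a unique tuple (z̃, θ, r, κ, w̃) ∈ H̃ × Y × Z × ℝ^{N−1} × H̃ satisfying: (i) ⟨G̃ z̃, G̃ v⟩_Y = F(v) for all v ∈ H̃; (ii) a(θ, ψ) + ⟨R ψ, r⟩_Z + Σ_{i=1}^{N−1} κᵢ (ℓ ψ)ᵢ = ⟨G̃ z̃, ψ⟩_Y for all ψ ∈ Y, ⟨R θ, s⟩_Z = 0 for all s ∈ Z, and ℓ θ = 0; (iii) ⟨G̃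 w̃, G̃ v⟩_Y = ⟨θ, G̃ v⟩_Y for all v ∈ H̃. Moreover G̃ w̃ = θ and w̃ = J w_X, where w_X is the unique element of W₀ satisfying a(G w_X, G v) = F(J v) for all v ∈ W₀. -/

import Mathlib

open scoped RealInnerProductSpace

set_option maxHeartbeats 1000000

theorem riesz_repr' {E : Type*} [NormedAddCommGroup E] [InnerProductSpace ℝ E]
    [FiniteDimensional ℝ E] (f : E →ₗ[ℝ] ℝ) : ∃ u : E, ∀ v, ⟪u, v⟫ = f v :=
  ⟨(InnerProductSpace.toDual ℝ E).symm (LinearMap.toContinuousLinearMap f), fun v => by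
    simp [InnerProductSpace.toDual_symm_apply]⟩

theorem exists_unique_sol' {E : Type*} [NormedAddCommGroup E] [InnerProductSpace ℝ E]
    [FiniteDimensional ℝ E] (b : E →ₗ[ℝ] E →ₗ[ℝ] ℝ)
    (hb : ∀ u : E, (∀ v, b u v = 0) → u = 0) (f : E →ₗ[ℝ] ℝ) :
    ∃! u : E, ∀ v, b u v = f v := by
  choose rz hrz using fun g : E →ₗ[ℝ] ℝ => riesz_repr' g
  have hL : ∀ u u' : E, (∀ v, b u v = b u' v) → u = u' := by
    intro u u' h
    have h0 : ∀ v, b (u - u') v = 0 := fun v => by simp [map_sub, h v]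
    exact sub_eq_zero.mp (hb _ h0)
  let L : E →ₗ[ℝ] E :=
    { toFun := fun u => rz (b u)
      map_add' := fun u u' => ext_inner_right ℝ fun v => by
        simp [hrz, inner_add_left, map_add, LinearMap.add_apply]
      map_smul' := fun c u => ext_inner_right ℝ fun v => by
        simp [hrz, real_inner_smul_left, map_smul, LinearMap.smul_apply, smul_eq_mul] }
  have hLinj : Function.Injective L := by
    intro u u' h
    apply hL
    intro v
    rw [← hrz (b u) v, ← hrz (b u') v]
    exact congrArg (fun x => (inner ℝ x v : ℝ)) h
  obtain ⟨u, hu⟩ := (LinearMap.injective_iff_surjective).mp hLinj (rz f)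
  have hsol : ∀ v, b u v = f v := by
    intro v
    have h1 : ⟪L u, v⟫ = b u v := hrz (b u) v
    rw [← h1, hu]
    exact hrz f v
  exact ⟨u, hsol, fun u' hu' => hL u' u fun v => (hu' v).trans (hsol v).symm⟩

/-- Abstract form of Theorem 4.2 (correctness of Algorithm 4.1 under general
boundary conditions): the pre-processing solve (i), the augmented Stokes-like
system (ii) with Lagrange multipliers `κ`, and the post-processing projection
(iii) have a unique solution, `G̃ w̃ = θ`, and `w̃ = J w_X` where `w_X` is the
unique Galerkin solution in `W₀ = {w : ℓ (G w) = 0}`. -/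
theorem stmt_5
    {Y Z W Ht : Type*}
    [NormedAddCommGroup Y] [InnerProductSpace ℝ Y] [FiniteDimensional ℝ Y]
    [NormedAddCommGroup Z] [InnerProductSpace ℝ Z] [FiniteDimensional ℝ Z]
    [NormedAddCommGroup W] [InnerProductSpace ℝ W] [FiniteDimensional ℝ W]
    [NormedAddCommGroup Ht] [InnerProductSpace ℝ Ht] [FiniteDimensional ℝ Ht]
    (N : ℕ) (hN : 1 ≤ N)
    (R : Y →ₗ[ℝ] Z) (hR : Function.Surjective R)
    (ℓ : Y →ₗ[ℝ] (Fin (N - 1) → ℝ))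
    (G : W →ₗ[ℝ] Y) (hG : Function.Injective G)
    (hexact : LinearMap.range G = LinearMap.ker R)
    (Gt : Ht →ₗ[ℝ] Y) (hGt : Function.Injective Gt)
    (J : W →ₗ[ℝ] Ht) (hJ : Gt.comp J = G)
    (a : Y →ₗ[ℝ] Y →ₗ[ℝ] ℝ) (α : ℝ) (hα : 0 < α)
    (ha_pos : ∀ θ : Y, 0 ≤ a θ θ)
    (ha_coer : ∀ w : W, ℓ (G w) = 0 → α * ‖w‖ ^ 2 ≤ a (G w) (G w))
    (hsurj : ∀ (r : Z) (κ : Fin (N - 1) → ℝ), ∃ ψ : Y, R ψ = r ∧ ℓ ψ = κ)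
    (F : Ht →ₗ[ℝ] ℝ) :
    (∃! q : Ht × Y × Z × (Fin (N - 1) → ℝ) × Ht,
        (∀ v : Ht, ⟪Gt q.1, Gt v⟫ = F v) ∧
        (∀ ψ : Y, a q.2.1 ψ + ⟪R ψ, q.2.2.1⟫ + ∑ i, q.2.2.2.1 i * ℓ ψ i
            = ⟪Gt q.1, ψ⟫) ∧
        (∀ s : Z, ⟪R q.2.1, s⟫ = 0) ∧
        ℓ q.2.1 = 0 ∧
        (∀ v : Ht, ⟪Gt q.2.2.2.2, Gt v⟫ = ⟪q.2.1, Gt v⟫)) ∧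
    (∃! wX : W, ℓ (G wX) = 0 ∧
        ∀ v : W, ℓ (G v) = 0 → a (G wX) (G v) = F (J v)) ∧
    (∀ (zt : Ht) (θ : Y) (r : Z) (κ : Fin (N - 1) → ℝ) (wt : Ht),
      (∀ v : Ht, ⟪Gt zt, Gt v⟫ = F v) →
      (∀ ψ : Y, a θ ψ + ⟪R ψ, r⟫ + ∑ i, κ i * ℓ ψ i = ⟪Gt zt, ψ⟫) →
      (∀ s : Z, ⟪R θ, s⟫ = 0) →
      ℓ θ = 0 →
      (∀ v : Ht, ⟪Gt wt, Gt v⟫ = ⟪θ, Gt v⟫) →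
      Gt wt = θ ∧
        ∀ wX : W, ℓ (G wX) = 0 →
          (∀ v : W, ℓ (G v) = 0 → a (G wX) (G v) = F (J v)) → wt = J wX) := by
  -- basic helpers
  have hGt0 : ∀ u : Ht, Gt u = 0 → u = 0 := fun u h => hGt (by simpa using h)
  have hcancel : ∀ u u' : Ht, (∀ v : Ht, ⟪Gt u, Gt v⟫ = ⟪Gt u', Gt v⟫) → u = u' := by
    intro u u' h
    have h0 : ⟪Gt (u - u'), Gt (u - u')⟫ = 0 := by
      simp only [map_sub, inner_sub_left, inner_sub_right]
      linarith [h u, h u']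
    exact sub_eq_zero.mp (hGt0 _ (inner_self_eq_zero.mp h0))
  have hGJ : ∀ w : W, Gt (J w) = G w := fun w => LinearMap.congr_fun hJ w
  have hGvker : ∀ v : W, R (G v) = 0 := fun v =>
    LinearMap.mem_ker.mp (hexact ▸ LinearMap.mem_range_self G v)
  -- the bilinear form on Ht
  let b1 : Ht →ₗ[ℝ] Ht →ₗ[ℝ] ℝ := LinearMap.mk₂ ℝ (fun u v => ⟪Gt u, Gt v⟫)
    (fun u u' v => by simp [inner_add_left])
    (fun c u v => by simp [real_inner_smul_left])
    (fun u v v' => by simp [inner_add_right])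
    (fun c u v => by simp [real_inner_smul_right])
  have hb1 : ∀ u : Ht, (∀ v, b1 u v = 0) → u = 0 := fun u h =>
    hGt0 u (inner_self_eq_zero.mp (h u))
  -- part (i)
  have hpart1 : ∃! zt : Ht, ∀ v, ⟪Gt zt, Gt v⟫ = F v := exists_unique_sol' b1 hb1 F
  -- Galerkin problem
  set W0 : Submodule ℝ W := LinearMap.ker (ℓ.comp G) with hW0
  have hmem : ∀ w : W, w ∈ W0 ↔ ℓ (G w) = 0 := fun w => by
    simp [hW0, LinearMap.mem_ker]
  let b2 : W0 →ₗ[ℝ] W0 →ₗ[ℝ] ℝ := a.compl₁₂ (G.comp W0.subtype) (G.comp W0.subtype)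
  have hb2 : ∀ u : W0, (∀ v, b2 u v = 0) → u = 0 := by
    intro u h
    have hu0 : ℓ (G (u : W)) = 0 := (hmem _).mp u.2
    have hc := ha_coer (u : W) hu0
    have h0 : a (G (u : W)) (G (u : W)) = 0 := h u
    have h2 : ‖(u : W)‖ ^ 2 = 0 := le_antisymm (by nlinarith) (sq_nonneg _)
    have h3 : (u : W) = 0 := norm_eq_zero.mp (pow_eq_zero_iff two_ne_zero |>.mp h2)
    exact Subtype.ext (by simpa using h3)
  have hGal0 : ∃! u : W0, ∀ v : W0, a (G (u : W)) (G (v : W)) = F (J (v : W)) :=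
    exists_unique_sol' b2 hb2 ((F.comp J).comp W0.subtype)
  have hGal : ∃! wX : W, ℓ (G wX) = 0 ∧
      ∀ v : W, ℓ (G v) = 0 → a (G wX) (G v) = F (J v) := by
    obtain ⟨u, hu, huniq⟩ := hGal0
    refine ⟨(u : W), ⟨(hmem _).mp u.2, fun v hv => hu ⟨v, (hmem v).mpr hv⟩⟩, ?_⟩
    rintro wX ⟨hwX1, hwX2⟩
    have : (⟨wX, (hmem wX).mpr hwX1⟩ : W0) = u :=
      huniq _ (fun v => hwX2 (v : W) ((hmem _).mp v.2))
    exact congrArg Subtype.val this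
  obtain ⟨wX0, ⟨hwX0a, hwX0b⟩, hwX0u⟩ := id hGal
  obtain ⟨zt0, hzt0, hzt0u⟩ := id hpart1
  set θ0 : Y := G wX0 with hθ0def
  -- key3 : structure of any solution of (ii)&(iii)
  have key3 : ∀ (zt : Ht) (θ : Y) (r : Z) (κ : Fin (N - 1) → ℝ) (wt : Ht),
      (∀ v : Ht, ⟪Gt zt, Gt v⟫ = F v) →
      (∀ ψ : Y, a θ ψ + ⟪R ψ, r⟫ + ∑ i, κ i * ℓ ψ i = ⟪Gt zt, ψ⟫) →
      (∀ s : Z, ⟪R θ, s⟫ = 0) → ℓ θ = 0 →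
      (∀ v : Ht, ⟪Gt wt, Gt v⟫ = ⟪θ, Gt v⟫) →
      ∃ w' : W, G w' = θ ∧ ℓ (G w') = 0 ∧
        (∀ v : W, ℓ (G v) = 0 → a (G w') (G v) = F (J v)) ∧ wt = J w' := by
    intro zt θ r κ wt h1 h2 h3 h4 h5
    have hRθ : R θ = 0 := inner_self_eq_zero.mp (h3 (R θ))
    obtain ⟨w', hw'⟩ : θ ∈ LinearMap.range G := hexact ▸ LinearMap.mem_ker.mpr hRθ
    have hw'0 : ℓ (G w') = 0 := by rw [hw']; exact h4
    have hGalw' : ∀ v : W, ℓ (G v) = 0 → a (G w') (G v) = F (J v) := by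
      intro v hv
      have h2v := h2 (G v)
      rw [hGvker v] at h2v
      simp only [inner_zero_left, hv, Pi.zero_apply, mul_zero, Finset.sum_const_zero,
        add_zero] at h2v
      have e1 : (⟪Gt zt, G v⟫ : ℝ) = F (J v) := by rw [← hGJ v]; exact h1 (J v)
      rw [hw']
      linarith
    have hwt : wt = J w' := by
      apply hcancel
      intro v
      rw [h5 v, ← hw', ← hGJ w']
    exact ⟨w', hw', hw'0, hGalw', hwt⟩
  -- the third bullet
  have part3 : ∀ (zt : Ht) (θ : Y) (r : Z) (κ : Fin (N - 1) → ℝ) (wt : Ht),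
      (∀ v : Ht, ⟪Gt zt, Gt v⟫ = F v) →
      (∀ ψ : Y, a θ ψ + ⟪R ψ, r⟫ + ∑ i, κ i * ℓ ψ i = ⟪Gt zt, ψ⟫) →
      (∀ s : Z, ⟪R θ, s⟫ = 0) → ℓ θ = 0 →
      (∀ v : Ht, ⟪Gt wt, Gt v⟫ = ⟪θ, Gt v⟫) →
      Gt wt = θ ∧ ∀ wX : W, ℓ (G wX) = 0 →
        (∀ v : W, ℓ (G v) = 0 → a (G wX) (G v) = F (J v)) → wt = J wX := by
    intro zt θ r κ wt h1 h2 h3 h4 h5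
    obtain ⟨w', hw', hw'0, hGalw', hwt⟩ := key3 zt θ r κ wt h1 h2 h3 h4 h5
    refine ⟨by rw [hwt, hGJ w', hw'], ?_⟩
    intro wX hX1 hX2
    have e1 : wX = wX0 := hwX0u wX ⟨hX1, hX2⟩
    have e2 : w' = wX0 := hwX0u w' ⟨hw'0, hGalw'⟩
    rw [hwt, e2, ← e1]
  -- existence for part (ii)
  let M : Y →ₗ[ℝ] Z × (Fin (N - 1) → ℝ) := R.prod ℓ
  have hMapp : ∀ ψ : Y, M ψ = (R ψ, ℓ ψ) := fun ψ => rfl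
  have hMsurj : LinearMap.range M = ⊤ := by
    rw [LinearMap.range_eq_top]
    rintro ⟨z, k⟩
    obtain ⟨ψ, e1, e2⟩ := hsurj z k
    exact ⟨ψ, by rw [hMapp, e1, e2]⟩
  obtain ⟨σ, hσ⟩ := M.exists_rightInverse_of_surjective hMsurj
  let gfun : Y →ₗ[ℝ] ℝ := (innerSL ℝ (Gt zt0)).toLinearMap - a θ0
  have hgfun : ∀ ψ, gfun ψ = ⟪Gt zt0, ψ⟫ - a θ0 ψ := fun ψ => by
    simp [gfun, LinearMap.sub_apply]
  let hfun : (Z × (Fin (N - 1) → ℝ)) →ₗ[ℝ] ℝ := gfun.comp σ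
  have hkey : ∀ ψ : Y, gfun ψ = hfun (M ψ) := by
    intro ψ
    have hMd : M (ψ - σ (M ψ)) = 0 := by
      have hc := LinearMap.congr_fun hσ (M ψ)
      simp only [LinearMap.comp_apply, LinearMap.id_coe, id_eq] at hc
      rw [map_sub, hc, sub_self]
    have hRd : R (ψ - σ (M ψ)) = 0 := by
      have := congrArg Prod.fst hMd
      rwa [hMapp] at this
    obtain ⟨w, hw⟩ : ψ - σ (M ψ) ∈ LinearMap.range G :=
      hexact ▸ LinearMap.mem_ker.mpr hRd
    have hld : ℓ (G w) = 0 := by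
      rw [hw]
      have := congrArg Prod.snd hMd
      rwa [hMapp] at this
    have hgd : gfun (G w) = 0 := by
      rw [hgfun]
      have e1 : (⟪Gt zt0, G w⟫ : ℝ) = F (J w) := by rw [← hGJ w]; exact hzt0 (J w)
      have e2 : a θ0 (G w) = F (J w) := hwX0b w hld
      rw [e1, e2, sub_self]
    calc gfun ψ = gfun ((ψ - σ (M ψ)) + σ (M ψ)) := by rw [sub_add_cancel]
    _ = gfun (ψ - σ (M ψ)) + gfun (σ (M ψ)) := map_add _ _ _
    _ = hfun (M ψ) := by rw [← hw, hgd, zero_add]; rfl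
  obtain ⟨r0, hr0⟩ := riesz_repr' (hfun.comp (LinearMap.inl ℝ Z (Fin (N - 1) → ℝ)))
  set κ0 : Fin (N - 1) → ℝ := fun i => hfun (0, fun j => if i = j then 1 else 0) with hκ0def
  have heq2 : ∀ ψ : Y, a θ0 ψ + ⟪R ψ, r0⟫ + ∑ i, κ0 i * ℓ ψ i = ⟪Gt zt0, ψ⟫ := by
    intro ψ
    have e1 : (⟪R ψ, r0⟫ : ℝ) = hfun (R ψ, 0) := by
      rw [real_inner_comm]
      have := hr0 (R ψ)
      simpa [LinearMap.comp_apply, LinearMap.inl_apply] using this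
    have e2 : ∑ i, κ0 i * ℓ ψ i = hfun (0, ℓ ψ) := by
      have hp := LinearMap.pi_apply_eq_sum_univ
        (hfun.comp (LinearMap.inr ℝ Z (Fin (N - 1) → ℝ))) (ℓ ψ)
      simp only [LinearMap.comp_apply, LinearMap.inr_apply, smul_eq_mul] at hp
      rw [hp]
      exact Finset.sum_congr rfl fun i _ => mul_comm _ _
    have e3 : hfun (R ψ, 0) + hfun (0, ℓ ψ) = hfun (R ψ, ℓ ψ) := by
      rw [← map_add]
      norm_num
    have e4 : hfun (R ψ, ℓ ψ) = gfun ψ := by rw [← hMapp]; exact (hkey ψ).symm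
    have e5 := hgfun ψ
    rw [e1, e2]
    linarith
  have hRθ0 : R θ0 = 0 := hGvker wX0
  have hℓθ0 : ℓ θ0 = 0 := hwX0a
  -- part (iii) existence
  obtain ⟨wt0, hwt0, -⟩ :=
    exists_unique_sol' b1 hb1 (((innerSL ℝ θ0).toLinearMap).comp Gt)
  have hwt0' : ∀ v : Ht, ⟪Gt wt0, Gt v⟫ = ⟪θ0, Gt v⟫ := fun v => hwt0 v
  -- assemble
  refine ⟨⟨(zt0, θ0, r0, κ0, wt0),
    ⟨hzt0, heq2, fun s => by rw [hRθ0]; exact inner_zero_left s, hℓθ0, hwt0'⟩, ?_⟩,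
    ⟨wX0, ⟨hwX0a, hwX0b⟩, hwX0u⟩, part3⟩
  rintro ⟨zt, θ, r, κ, wt⟩ ⟨h1, h2, h3, h4, h5⟩
  have hz : zt = zt0 := hcancel _ _ fun v => (h1 v).trans (hzt0 v).symm
  obtain ⟨w', hw', hw'0, hGalw', hwt⟩ := key3 zt θ r κ wt h1 h2 h3 h4 h5
  have hww : w' = wX0 := hwX0u w' ⟨hw'0, hGalw'⟩
  have hθ : θ = θ0 := by rw [← hw', hww]
  have hwteq : wt = wt0 := hcancel _ _ fun v =>
    (h5 v).trans (by rw [hθ]; exact (hwt0' v).symm)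
  have hrκ : ∀ ψ : Y, (⟪R ψ, r⟫ : ℝ) + ∑ i, κ i * ℓ ψ i
      = (⟪R ψ, r0⟫ : ℝ) + ∑ i, κ0 i * ℓ ψ i := by
    intro ψ
    have e1 := h2 ψ
    rw [hθ, hz] at e1
    have e2 := heq2 ψ
    linarith
  have hr : r = r0 := by
    obtain ⟨ψ, e1, e2⟩ := hsurj (r - r0) 0
    have hh := hrκ ψ
    rw [e1, e2] at hh
    simp only [Pi.zero_apply, mul_zero, Finset.sum_const_zero, add_zero] at hh
    have h0 : (⟪r - r0, r - r0⟫ : ℝ) = 0 := by rw [inner_sub_right]; linarith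
    exact sub_eq_zero.mp (inner_self_eq_zero.mp h0)
  have hκ : κ = κ0 := by
    funext i
    obtain ⟨ψ, e1, e2⟩ := hsurj 0 (fun j => if i = j then 1 else 0)
    have hh := hrκ ψ
    rw [e1, e2] at hh
    simp only [inner_zero_left, zero_add, mul_ite, mul_one, mul_zero,
      Finset.sum_ite_eq, Finset.mem_univ, if_true] at hh
    exact hh
  rw [Prod.mk.injEq, Prod.mk.injEq, Prod.mk.injEq, Prod.mk.injEq]
  exact ⟨hz, hθ, hr, hκ, hwteq⟩
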